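/- Let Z be a measurable space with measure ν, S a compact metric space, and z ↦ μ_z a ν-measurable assignment of Borel probability measures on S (i.e., z ↦ μ_z(f) is measurable for each continuous f : S → ℝ). Then the assignment z ↦ Supp(μ_z) ∈ 𝓒(S) is ν-measurable with respect to the Borel σ-algebra of the Hausdorff topology on the hyperspace 𝓒(S) of nonempty closed subsets. -/

import Mathlib

open MeasureTheory

/-- The (closed) support of a measure on a topological space: the set of points all
of whose open neighbourhoods have positive measure. -/
def measSupport {S : Type*} [TopologicalSpace S] [MeasurableSpace S]
    (μ : Measure S) : Set S :=
  {x | ∀ U : Set S, IsOpen U → x ∈ U → μ U ≠ 0}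

/-- For an open set `U`, the support meets `U` iff `U` has positive measure. -/
lemma measSupport_inter_nonempty_iff {S : Type*} [MetricSpace S] [CompactSpace S]
    [MeasurableSpace S] [BorelSpace S] (μ : Measure S) {U : Set S} (hU : IsOpen U) :
    (measSupport μ ∩ U).Nonempty ↔ μ U ≠ 0 := by
  constructor
  · rintro ⟨x, hxs, hxU⟩
    exact hxs U hU hxU
  · intro hμU
    by_contra h
    rw [Set.not_nonempty_iff_eq_empty] at h
    -- every point of U has an open null neighbourhood
    have key : ∀ x ∈ U, ∃ V : Set S, IsOpen V ∧ x ∈ V ∧ μ V = 0 := by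
      intro x hxU
      have : x ∉ measSupport μ := fun hx => Set.eq_empty_iff_forall_notMem.1 h x ⟨hx, hxU⟩
      simp only [measSupport, Set.mem_setOf_eq, not_forall] at this
      obtain ⟨V, hVopen, hxV, hV0⟩ := this
      exact ⟨V, hVopen, hxV, not_not.1 hV0⟩
    -- the family of open null sets
    set T : Set (Set S) := {V | IsOpen V ∧ μ V = 0} with hT
    obtain ⟨T', hT'count, hT'sub, hT'union⟩ :=
      TopologicalSpace.isOpen_sUnion_countable T (fun V hV => hV.1)
    have hUsub : U ⊆ ⋃₀ T' := by
      rw [hT'union]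
      intro x hxU
      obtain ⟨V, hVopen, hxV, hV0⟩ := key x hxU
      exact ⟨V, ⟨hVopen, hV0⟩, hxV⟩
    have : μ (⋃₀ T') = 0 := by
      apply measure_sUnion_null_iff hT'count |>.2
      intro V hV
      exact (hT'sub hV).2
    exact hμU (measure_mono_null hUsub this)

/-- Measurability of `z ↦ μ z U` for `U` open, from measurability against
continuous functions, via monotone approximation of the indicator. -/
lemma measurable_measure_open {Z S : Type*} [MeasurableSpace Z] [MetricSpace S] [CompactSpace S]
    [MeasurableSpace S] [BorelSpace S]
    (μ : Z → Measure S) (hprob : ∀ z, IsProbabilityMeasure (μ z))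
    (hmeas : ∀ f : C(S, ℝ), Measurable fun z => ∫ ξ, f ξ ∂(μ z))
    {U : Set S} (hU : IsOpen U) : Measurable fun z => μ z U := by
  rcases Set.eq_empty_or_nonempty Uᶜ with hUc | hUc
  · -- U = univ
    have hUuniv : U = Set.univ := by
      rw [← Set.compl_empty_iff, hUc]
    have : (fun z => μ z U) = fun _ => (1 : ENNReal) := by
      funext z
      rw [hUuniv]
      exact (hprob z).measure_univ
    rw [this]
    exact measurable_const
  · -- approximating continuous functions
    set f : ℕ → C(S, ℝ) := fun n =>
      ⟨fun x => min (n * Metric.infDist x Uᶜ) 1,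
        (continuous_const.mul (Metric.continuous_infDist_pt Uᶜ)).min continuous_const⟩ with hf
    have hf_nonneg : ∀ n x, 0 ≤ f n x := fun n x =>
      le_min (mul_nonneg (Nat.cast_nonneg n) Metric.infDist_nonneg) zero_le_one
    have hf_le_one : ∀ n x, f n x ≤ 1 := fun n x => min_le_right _ _
    have hf_mono : ∀ x, Monotone fun n => f n x := by
      intro x m n hmn
      exact min_le_min (mul_le_mul_of_nonneg_right (by exact_mod_cast hmn)
        Metric.infDist_nonneg) le_rfl
    -- the ENNReal versions
    set g : ℕ → S → ENNReal := fun n x => ENNReal.ofReal (f n x) with hg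
    have hg_meas : ∀ n, Measurable (g n) :=
      fun n => ENNReal.measurable_ofReal.comp (f n).continuous.measurable
    have hg_mono : Monotone g := fun m n hmn x =>
      ENNReal.ofReal_le_ofReal (hf_mono x hmn)
    -- pointwise supremum is the indicator of U
    have hsup : ∀ x, (⨆ n, g n x) = U.indicator (fun _ => (1 : ENNReal)) x := by
      intro x
      by_cases hx : x ∈ U
      · have hd : 0 < Metric.infDist x Uᶜ :=
          (hU.isClosed_compl.notMem_iff_infDist_pos hUc).1 (by simpa using hx)
        rw [Set.indicator_of_mem hx]
        apply le_antisymm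
        · exact iSup_le fun n => ENNReal.ofReal_le_one.2 (hf_le_one n x)
        · obtain ⟨n, hn⟩ := exists_nat_gt (1 / Metric.infDist x Uᶜ)
          have h1 : (1 : ℝ) ≤ n * Metric.infDist x Uᶜ := by
            rw [div_lt_iff₀ hd] at hn
            linarith
          have : f n x = 1 := min_eq_right h1
          calc (1 : ENNReal) = ENNReal.ofReal (f n x) := by rw [this]; simp
            _ ≤ ⨆ n, g n x := le_iSup (fun n => g n x) n
      · have hd : Metric.infDist x Uᶜ = 0 := Metric.infDist_zero_of_mem (by simpa using hx)
        rw [Set.indicator_of_notMem hx]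
        simp only [hg, hf]
        apply le_antisymm _ (zero_le)
        apply iSup_le
        intro n
        simp [ContinuousMap.coe_mk, hd]
      -- done
    -- rewrite μ z U via monotone convergence
    have key : ∀ z, μ z U = ⨆ n, ENNReal.ofReal (∫ ξ, f n ξ ∂(μ z)) := by
      intro z
      have hint : ∀ n, Integrable (fun x => f n x) (μ z) :=
        fun n => (f n).continuous.integrable_of_hasCompactSupport
          (IsClosed.isCompact (isClosed_tsupport _))
      have h1 : μ z U = ∫⁻ x, U.indicator (fun _ => (1 : ENNReal)) x ∂(μ z) := by
        rw [lintegral_indicator hU.measurableSet]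
        simp
      rw [h1]
      have h2 : ∫⁻ x, U.indicator (fun _ => (1 : ENNReal)) x ∂(μ z)
          = ∫⁻ x, ⨆ n, g n x ∂(μ z) := by
        congr 1
        funext x
        rw [hsup x]
      rw [h2, lintegral_iSup hg_meas hg_mono]
      congr 1
      funext n
      rw [← ofReal_integral_eq_lintegral_ofReal (hint n)
        (Filter.Eventually.of_forall (hf_nonneg n))]
    have : (fun z => μ z U) = fun z => ⨆ n, ENNReal.ofReal (∫ ξ, f n ξ ∂(μ z)) := by
      funext z; exact key z
    rw [this]
    exact Measurable.iSup fun n => ENNReal.measurable_ofReal.comp (hmeas (f n))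

/-- Lemma 18 in abstract form: if `z ↦ μ_z` is a measurable family of probability
measures on a compact metric space `S`, then `z ↦ Supp(μ_z)` is measurable, i.e.
`{z : Supp(μ_z) ∩ U ≠ ∅}` is measurable for every open `U`. -/
theorem stmt11 {Z S : Type*} [MeasurableSpace Z] [MetricSpace S] [CompactSpace S]
    [MeasurableSpace S] [BorelSpace S]
    (ν : Measure Z)
    (μ : Z → Measure S) (hprob : ∀ z, IsProbabilityMeasure (μ z))
    (hmeas : ∀ f : C(S, ℝ), Measurable fun z => ∫ ξ, f ξ ∂(μ z)) :
    ∀ U : Set S, IsOpen U →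
      MeasurableSet {z : Z | (measSupport (μ z) ∩ U).Nonempty} := by
  intro U hU
  have : {z : Z | (measSupport (μ z) ∩ U).Nonempty} = {z : Z | μ z U ≠ 0} := by
    ext z
    exact measSupport_inter_nonempty_iff (μ z) hU
  rw [this]
  have hm := measurable_measure_open μ hprob hmeas hU
  exact (hm (measurableSet_singleton 0)).compl
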